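/- Let q ≥ 4 be a prime power. The (q-1)-uniform code C2(q), whose incidence matrix consists of the q² block-columns of a resolvable TD(q-1,q) together with q-3 additional columns of weight q-1 (the i-th additional column having ones in positions (i-1)q+j for 2 ≤ j ≤ q), is a (q-1)-uniform CBC with n = q²+q-3, N = (q-1)(q²+q-3), k = q²-q-1, m = q²-q; moreover ⌊(k-1)·C(m,c)/C(k-1,c)⌋ - n = 1. -/

import Mathlib

/-- A transversal design TD(ℓ,h): points `α`, `ℓ` groups of size `h`, blocks of size `ℓ`
meeting each group in exactly one point, every pair of points from different groups in
exactly one block. -/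
structure TD (α : Type) [DecidableEq α] [Fintype α] (ℓ h : ℕ) where
  groups : Finset (Finset α)
  blocks : Finset (Finset α)
  card_points : Fintype.card α = ℓ * h
  groups_card : groups.card = ℓ
  group_size : ∀ G ∈ groups, G.card = h
  groups_partition : ∀ x : α, ∃! G, G ∈ groups ∧ x ∈ G
  block_size : ∀ B ∈ blocks, B.card = ℓ
  block_meets_group : ∀ B ∈ blocks, ∀ G ∈ groups, (B ∩ G).card = 1
  pair_unique : ∀ x y : α, x ≠ y → (∀ G ∈ groups, ¬(x ∈ G ∧ y ∈ G)) →
    ∃! B, B ∈ blocks ∧ x ∈ B ∧ y ∈ B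

/-- A resolvable transversal design: the blocks are partitioned into `h` parallel
classes of `h` pairwise disjoint blocks, each class covering every point exactly once. -/
structure RTD (α : Type) [DecidableEq α] [Fintype α] (ℓ h : ℕ) extends TD α ℓ h where
  classes : Finset (Finset (Finset α))
  classes_card : classes.card = h
  class_sub : ∀ C ∈ classes, C ⊆ blocks
  class_card : ∀ C ∈ classes, C.card = h
  class_cover : ∀ C ∈ classes, ∀ x : α, ∃! B, B ∈ C ∧ x ∈ B
  block_class : ∀ B ∈ blocks, ∃! C, C ∈ classes ∧ B ∈ C

lemma bonferroni {α β : Type*} [DecidableEq α] [DecidableEq β] (f : α → Finset β) (T : Finset α) :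
    2 * ∑ x ∈ T, (f x).card ≤ 2 * (T.biUnion f).card + ∑ p ∈ T.offDiag, (f p.1 ∩ f p.2).card := by
  classical
  induction T using Finset.induction_on with
  | empty => simp
  | @insert a T ha ih =>
    rw [Finset.sum_insert ha, Finset.biUnion_insert, Finset.offDiag_insert ha]
    have hd1 : Disjoint (T.offDiag ∪ {a} ×ˢ T) (T ×ˢ {a}) := by
      simp only [Finset.disjoint_left, Finset.mem_union, Finset.mem_product, Finset.mem_offDiag,
        Finset.mem_singleton]
      rintro ⟨x, y⟩ h ⟨hx, rfl⟩
      rcases h with ⟨_, h, _⟩ | ⟨h, _⟩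
      · exact ha h
      · exact ha (h ▸ hx)
    have hd2 : Disjoint T.offDiag ({a} ×ˢ T) := by
      simp only [Finset.disjoint_left, Finset.mem_product, Finset.mem_offDiag, Finset.mem_singleton]
      rintro ⟨x, y⟩ ⟨hx, _, _⟩ ⟨rfl, _⟩
      exact ha hx
    rw [Finset.sum_union hd1, Finset.sum_union hd2]
    have hsa : ∑ p ∈ {a} ×ˢ T, (f p.1 ∩ f p.2).card = ∑ y ∈ T, (f a ∩ f y).card := by
      rw [Finset.singleton_product, Finset.sum_map]; rfl
    have hsb : ∑ p ∈ T ×ˢ {a}, (f p.1 ∩ f p.2).card = ∑ y ∈ T, (f y ∩ f a).card := by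
      rw [Finset.product_singleton, Finset.sum_map]; rfl
    have hcu : (f a ∪ T.biUnion f).card + (f a ∩ T.biUnion f).card = (f a).card + (T.biUnion f).card :=
      Finset.card_union_add_card_inter _ _
    have hI1 : (f a ∩ T.biUnion f).card ≤ ∑ y ∈ T, (f a ∩ f y).card := by
      rw [Finset.inter_biUnion]; exact Finset.card_biUnion_le
    have hI2 : (f a ∩ T.biUnion f).card ≤ ∑ y ∈ T, (f y ∩ f a).card := by
      have : ∀ y, f a ∩ f y = f y ∩ f a := fun y => Finset.inter_comm _ _
      simp_rw [← this]; exact hI1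
    omega

lemma pairbound {α : Type*} [DecidableEq α] (R : Finset (Finset α))
    (hint : ∀ X ∈ R, ∀ Y ∈ R, X ≠ Y → (X ∩ Y).card ≤ 1) :
    ∑ X ∈ R, (X.card * X.card - X.card) ≤
      (R.biUnion id).card * (R.biUnion id).card - (R.biUnion id).card := by
  classical
  have hdisj : ∀ X ∈ R, ∀ Y ∈ R, X ≠ Y → Disjoint X.offDiag Y.offDiag := by
    intro X hX Y hY hXY
    rw [Finset.disjoint_left]
    rintro ⟨x, y⟩ hp hq
    rw [Finset.mem_offDiag] at hp hq
    have h2 : 1 < (X ∩ Y).card :=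
      Finset.one_lt_card.mpr ⟨x, by simp [hp.1, hq.1], y, by simp [hp.2.1, hq.2.1], hp.2.2⟩
    exact absurd (hint X hX Y hY hXY) (by omega)
  calc ∑ X ∈ R, (X.card * X.card - X.card) = ∑ X ∈ R, X.offDiag.card := by
        simp [Finset.offDiag_card]
    _ = (R.biUnion fun X => X.offDiag).card := (Finset.card_biUnion hdisj).symm
    _ ≤ (R.biUnion id).offDiag.card := by
        apply Finset.card_le_card
        intro p hp
        rw [Finset.mem_biUnion] at hp
        obtain ⟨X, hX, hpX⟩ := hp
        rw [Finset.mem_offDiag] at hpX ⊢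
        exact ⟨Finset.mem_biUnion.mpr ⟨X, hX, hpX.1⟩, Finset.mem_biUnion.mpr ⟨X, hX, hpX.2.1⟩, hpX.2.2⟩
    _ = _ := Finset.offDiag_card _

lemma card_filter_val_interval (n a b : ℕ) (hb : b < n) :
    (Finset.univ.filter (fun x : Fin n => a ≤ x.val ∧ x.val ≤ b)).card = b + 1 - a := by
  rw [← Nat.card_Icc a b]
  refine Finset.card_bij' (fun x _ => x.val) (fun v hv => ⟨v, by
    rw [Finset.mem_Icc] at hv; omega⟩) ?_ ?_ ?_ ?_
  · intro x hx; rw [Finset.mem_filter] at hx; rw [Finset.mem_Icc]; exact hx.2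
  · intro v hv; rw [Finset.mem_Icc] at hv; simp [hv]
  · intro x hx; rfl
  · intro v hv; rfl

set_option maxHeartbeats 2000000 in
/-- For q ≥ 4 a prime power, the code C2(q), whose items are the q²
blocks of a resolvable TD(q-1,q) on the points 0,…,q(q-1)-1 (with the q-1 groups being
the consecutive chunks of q points) together with q-3 additional items, the i-th
(1 ≤ i ≤ q-3) consisting of the points (i-1)q+j-1 for 2 ≤ j ≤ q, is a (q-1)-uniform
CBC with n = q²+q-3, N = (q-1)(q²+q-3), k = q²-q-1, m = q²-q; moreover the uniform
bound ⌊(k-1)·C(m,c)/C(k-1,c)⌋ exceeds n by exactly 1. -/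
theorem stmt_17 (q : ℕ) (hq : 4 ≤ q) (hpp : IsPrimePow q)
    (D : RTD (Fin (q * (q - 1))) (q - 1) q)
    (hgroups : ∀ i < q - 1,
      (Finset.univ.filter
        (fun x : Fin (q * (q - 1)) => i * q ≤ x.val ∧ x.val < (i + 1) * q)) ∈ D.groups) :
    let E : ℕ → Finset (Fin (q * (q - 1))) := fun i =>
      Finset.univ.filter (fun x => (i - 1) * q + 1 ≤ x.val ∧ x.val ≤ i * q - 1)
    let Items := D.blocks ∪ (Finset.Icc 1 (q - 3)).image E
    Items.card = q ^ 2 + q - 3 ∧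
    (∀ X ∈ Items, X.card = q - 1) ∧
    (∑ X ∈ Items, X.card) = (q - 1) * (q ^ 2 + q - 3) ∧
    Fintype.card (Fin (q * (q - 1))) = q ^ 2 - q ∧
    (∀ R ⊆ Items, R.card ≤ q ^ 2 - q - 1 → R.card ≤ (R.biUnion id).card) ∧
    ⌊((q : ℚ) ^ 2 - q - 2) * ((q ^ 2 - q).choose (q - 1) : ℚ) /
        ((q ^ 2 - q - 2).choose (q - 1) : ℚ)⌋ - (q ^ 2 + q - 3 : ℤ) = 1 := by
  intro E Items
  classical
  have hpow : q ^ 2 = q * q := sq q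
  have hq2 : 4 * q ≤ q * q := Nat.mul_le_mul_right q hq
  have hqq : q ≤ q * q := by omega
  have hmul : q * (q - 1) = q * q - q := by
    zify [show 1 ≤ q by omega, show q ≤ q * q by omega]; ring
  have hEdef : ∀ i : ℕ, E i = Finset.univ.filter
      (fun x : Fin (q * (q - 1)) => (i - 1) * q + 1 ≤ x.val ∧ x.val ≤ i * q - 1) := fun _ => rfl
  have hItems : Items = D.blocks ∪ (Finset.Icc 1 (q - 3)).image E := rfl
  -- card of E i
  have hEcard : ∀ i, 1 ≤ i → i ≤ q - 3 → (E i).card = q - 1 := by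
    intro i hi1 hi2
    have hle : i * q ≤ (q - 3) * q := Nat.mul_le_mul_right q hi2
    have h3 : (q - 3) * q + 2 * q = (q - 1) * q := by
      rw [show q - 1 = (q - 3) + 2 by omega, add_mul]
    have hiq : 1 * q ≤ i * q := Nat.mul_le_mul_right q hi1
    have hsplit : i * q = (i - 1) * q + q := by
      conv_lhs => rw [show i = (i - 1) + 1 by omega]
      rw [add_mul, one_mul]
    have hcm : q * (q - 1) = (q - 1) * q := Nat.mul_comm _ _
    rw [hEdef, card_filter_val_interval _ _ _ (by omega)]
    omega
  -- E i sits inside group i-1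
  have hGmem : ∀ i, 1 ≤ i → i ≤ q - 3 →
      (Finset.univ.filter (fun x : Fin (q * (q - 1)) =>
        (i - 1) * q ≤ x.val ∧ x.val < ((i - 1) + 1) * q)) ∈ D.groups :=
    fun i h1 h2 => hgroups (i - 1) (by omega)
  have hEsub : ∀ i, 1 ≤ i → i ≤ q - 3 → E i ⊆ Finset.univ.filter
      (fun x : Fin (q * (q - 1)) => (i - 1) * q ≤ x.val ∧ x.val < ((i - 1) + 1) * q) := by
    intro i h1 h2 x hx
    rw [hEdef, Finset.mem_filter] at hx
    rw [Finset.mem_filter]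
    refine ⟨Finset.mem_univ _, by omega, ?_⟩
    rw [show (i - 1) + 1 = i by omega]
    have hiq : 1 * q ≤ i * q := Nat.mul_le_mul_right q h1
    omega
  have hEnb : ∀ i, 1 ≤ i → i ≤ q - 3 → E i ∉ D.blocks := by
    intro i h1 h2 hB
    have h := D.block_meets_group (E i) hB _ (hGmem i h1 h2)
    rw [Finset.inter_eq_left.mpr (hEsub i h1 h2), hEcard i h1 h2] at h
    omega
  have hEdisj : ∀ i j, 1 ≤ i → i ≤ q - 3 → 1 ≤ j → j ≤ q - 3 → i ≠ j →
      ∀ x, x ∈ E i → x ∈ E j → False := by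
    intro i j hi1 hi2 hj1 hj2 hij x hxi hxj
    rw [hEdef, Finset.mem_filter] at hxi hxj
    rcases Nat.lt_or_ge i j with h | h
    · have h1 : i * q ≤ (j - 1) * q := Nat.mul_le_mul_right q (by omega)
      have h2 : 1 * q ≤ i * q := Nat.mul_le_mul_right q hi1
      omega
    · have h1 : j * q ≤ (i - 1) * q := Nat.mul_le_mul_right q (by omega)
      have h2 : 1 * q ≤ j * q := Nat.mul_le_mul_right q hj1
      omega
  have hEinj : Set.InjOn E (Finset.Icc 1 (q - 3)) := by
    intro i hi j hj hij
    rw [Finset.coe_Icc, Set.mem_Icc] at hi hj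
    by_contra hne
    have hne2 : (E i).Nonempty := by
      rw [← Finset.card_pos, hEcard i hi.1 hi.2]; omega
    obtain ⟨x, hx⟩ := hne2
    exact hEdisj i j hi.1 hi.2 hj.1 hj.2 hne x hx (hij ▸ hx)
  have hdisjBI : Disjoint D.blocks ((Finset.Icc 1 (q - 3)).image E) := by
    rw [Finset.disjoint_right]
    intro X hX
    rw [Finset.mem_image] at hX
    obtain ⟨i, hi, rfl⟩ := hX
    rw [Finset.mem_Icc] at hi
    exact hEnb i hi.1 hi.2
  -- blocks count
  have hblocks_eq : D.blocks = D.classes.biUnion (fun C => C) := by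
    ext B
    simp only [Finset.mem_biUnion]
    constructor
    · intro hB
      obtain ⟨C, hC, -⟩ := D.block_class B hB
      exact ⟨C, hC.1, hC.2⟩
    · rintro ⟨C, hC, hBC⟩
      exact D.class_sub C hC hBC
  have hclass_disj : ∀ C1 ∈ D.classes, ∀ C2 ∈ D.classes, C1 ≠ C2 → Disjoint C1 C2 := by
    intro C1 h1 C2 h2 hne
    rw [Finset.disjoint_left]
    intro B hB1 hB2
    have hBb : B ∈ D.blocks := D.class_sub C1 h1 hB1
    obtain ⟨C, hC, huniq⟩ := D.block_class B hBb
    exact hne ((huniq C1 ⟨h1, hB1⟩).trans (huniq C2 ⟨h2, hB2⟩).symm)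
  have hblocks_card : D.blocks.card = q * q := by
    rw [hblocks_eq, Finset.card_biUnion hclass_disj,
      Finset.sum_congr rfl (fun C hC => D.class_card C hC), Finset.sum_const,
      D.classes_card, smul_eq_mul]
  have hItemsCard : Items.card = q ^ 2 + q - 3 := by
    rw [hItems, Finset.card_union_of_disjoint hdisjBI, hblocks_card,
      Finset.card_image_of_injOn hEinj, Nat.card_Icc]
    omega
  -- membership in Items
  have hItemsMem : ∀ X ∈ Items, X ∈ D.blocks ∨ ∃ i, 1 ≤ i ∧ i ≤ q - 3 ∧ X = E i := by
    intro X hX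
    rw [hItems, Finset.mem_union] at hX
    rcases hX with h | h
    · exact Or.inl h
    · rw [Finset.mem_image] at h
      obtain ⟨i, hi, rfl⟩ := h
      rw [Finset.mem_Icc] at hi
      exact Or.inr ⟨i, hi.1, hi.2, rfl⟩
  have hcardX : ∀ X ∈ Items, X.card = q - 1 := by
    intro X hX
    rcases hItemsMem X hX with h | ⟨i, h1, h2, rfl⟩
    · exact D.block_size X h
    · exact hEcard i h1 h2
  have hsum : (∑ X ∈ Items, X.card) = (q - 1) * (q ^ 2 + q - 3) := by
    rw [Finset.sum_congr rfl hcardX, Finset.sum_const, hItemsCard, smul_eq_mul, Nat.mul_comm]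
  have hcardPt : Fintype.card (Fin (q * (q - 1))) = q ^ 2 - q := by
    rw [Fintype.card_fin]; omega
  -- degree of a point in blocks
  have hdeg : ∀ x : Fin (q * (q - 1)), (D.blocks.filter (fun B => x ∈ B)).card = q := by
    intro x
    have hbij : (D.blocks.filter (fun B => x ∈ B)).card = D.classes.card := by
      refine Finset.card_bij'
        (fun B hB => (D.block_class B (Finset.mem_filter.mp hB).1).exists.choose)
        (fun C hC => (D.class_cover C hC x).exists.choose) ?_ ?_ ?_ ?_
      · intro B hB
        exact (D.block_class B (Finset.mem_filter.mp hB).1).exists.choose_spec.1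
      · intro C hC
        have hspec := (D.class_cover C hC x).exists.choose_spec
        rw [Finset.mem_filter]
        exact ⟨D.class_sub C hC hspec.1, hspec.2⟩
      · intro B hB
        have hCspec := (D.block_class B (Finset.mem_filter.mp hB).1).exists.choose_spec
        have hcov := D.class_cover _ hCspec.1 x
        exact hcov.unique hcov.exists.choose_spec ⟨hCspec.2, (Finset.mem_filter.mp hB).2⟩
      · intro C hC
        have hBspec := (D.class_cover C hC x).exists.choose_spec
        have hBb : (D.class_cover C hC x).exists.choose ∈ D.blocks := D.class_sub C hC hBspec.1
        exact (D.block_class _ hBb).unique ((D.block_class _ hBb).exists.choose_spec) ⟨hC, hBspec.1⟩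
    rw [hbij, D.classes_card]
  -- two distinct points lie in at most one common block
  have two_blocks : ∀ (x y : Fin (q * (q - 1))), x ≠ y → ∀ B1, B1 ∈ D.blocks →
      ∀ B2, B2 ∈ D.blocks → x ∈ B1 → y ∈ B1 → x ∈ B2 → y ∈ B2 → B1 = B2 := by
    intro x y hxy B1 hB1 B2 hB2 hx1 hy1 hx2 hy2
    obtain ⟨Gx, ⟨hGx, hxGx⟩, hGuniq⟩ := D.groups_partition x
    by_cases hyG : y ∈ Gx
    · exfalso
      have h1 := D.block_meets_group B1 hB1 Gx hGx
      have h2 : 1 < (B1 ∩ Gx).card := Finset.one_lt_card.mpr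
        ⟨x, by simp [hx1, hxGx], y, by simp [hy1, hyG], hxy⟩
      omega
    · have hno : ∀ G ∈ D.groups, ¬(x ∈ G ∧ y ∈ G) := by
        rintro G hG ⟨hxG, hyGm⟩
        exact hyG ((hGuniq G ⟨hG, hxG⟩) ▸ hyGm)
      obtain ⟨B, hB, hBuniq⟩ := D.pair_unique x y hxy hno
      exact (hBuniq B1 ⟨hB1, hx1, hy1⟩).trans (hBuniq B2 ⟨hB2, hx2, hy2⟩).symm
  have hbb : ∀ B1 ∈ D.blocks, ∀ B2 ∈ D.blocks, B1 ≠ B2 → (B1 ∩ B2).card ≤ 1 := by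
    intro B1 h1 B2 h2 hne
    rw [Finset.card_le_one]
    intro a ha b hb
    rw [Finset.mem_inter] at ha hb
    by_contra hab
    exact hne (two_blocks a b hab B1 h1 B2 h2 ha.1 hb.1 ha.2 hb.2)
  have hBE : ∀ B ∈ D.blocks, ∀ i, 1 ≤ i → i ≤ q - 3 → (B ∩ E i).card ≤ 1 := by
    intro B hB i h1 h2
    have h := D.block_meets_group B hB _ (hGmem i h1 h2)
    have hsub : B ∩ E i ⊆ B ∩ (Finset.univ.filter
        (fun x : Fin (q * (q - 1)) => (i - 1) * q ≤ x.val ∧ x.val < ((i - 1) + 1) * q)) :=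
      Finset.inter_subset_inter (Finset.Subset.refl _) (hEsub i h1 h2)
    have := Finset.card_le_card hsub
    omega
  have hIntPair : ∀ X ∈ Items, ∀ Y ∈ Items, X ≠ Y → (X ∩ Y).card ≤ 1 := by
    intro X hX Y hY hne
    rcases hItemsMem X hX with hXb | ⟨i, hi1, hi2, rfl⟩ <;>
      rcases hItemsMem Y hY with hYb | ⟨j, hj1, hj2, hYe⟩
    · exact hbb X hXb Y hYb hne
    · subst hYe; exact hBE X hXb j hj1 hj2
    · rw [Finset.inter_comm]; exact hBE Y hYb i hi1 hi2
    · subst hYe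
      have hij : i ≠ j := fun h => hne (by rw [h])
      have hempty : E i ∩ E j = ∅ := by
        rw [Finset.eq_empty_iff_forall_notMem]
        intro x hx
        rw [Finset.mem_inter] at hx
        exact hEdisj i j hi1 hi2 hj1 hj2 hij x hx.1 hx.2
      rw [hempty]; simp
  -- Hall condition
  have hHall : ∀ R ⊆ Items, R.card ≤ q ^ 2 - q - 1 → R.card ≤ (R.biUnion id).card := by
    intro R hR hRk
    by_contra hcon
    push_neg at hcon
    set U := R.biUnion id with hU
    have hRcard : ∀ X ∈ R, X.card = q - 1 := fun X hX => hcardX X (hR hX)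
    have hUsub : ∀ X ∈ R, X ⊆ U := fun X hX => Finset.subset_biUnion_of_mem id hX
    have hule : U.card ≤ q * (q - 1) := by
      have := Finset.card_le_univ U
      rwa [Fintype.card_fin] at this
    by_cases hcase : U.card ≤ (q - 1) * (q - 2) + 1
    · have hp := pairbound R (fun X hX Y hY h => hIntPair X (hR hX) Y (hR hY) h)
      rw [Finset.sum_congr rfl (fun X hX => by rw [hRcard X hX]), Finset.sum_const,
        smul_eq_mul] at hp
      have hc2 : (q - 1) * (q - 1) - (q - 1) = (q - 1) * (q - 2) := by
        zify [show 1 ≤ q by omega, show 2 ≤ q by omega,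
          show q - 1 ≤ (q - 1) * (q - 1) by nlinarith]
        ring
      rw [hc2] at hp
      have hupos : U.card * U.card - U.card = U.card * (U.card - 1) := by
        rcases Nat.eq_zero_or_pos U.card with h0 | h0
        · simp [h0]
        · zify [show U.card ≤ U.card * U.card by nlinarith, show 1 ≤ U.card by omega]
          ring
      have hcpos : 0 < (q - 1) * (q - 2) := Nat.mul_pos (by omega) (by omega)
      have hub : U.card * (U.card - 1) ≤ U.card * ((q - 1) * (q - 2)) :=
        Nat.mul_le_mul_left _ (by omega)
      have hrle : R.card * ((q - 1) * (q - 2)) ≤ U.card * ((q - 1) * (q - 2)) := by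
        calc R.card * ((q - 1) * (q - 2)) ≤ U.card * U.card - U.card := hp
          _ = U.card * (U.card - 1) := hupos
          _ ≤ _ := hub
      have := Nat.le_of_mul_le_mul_right hrle hcpos
      omega
    · push_neg at hcase
      set T := Finset.univ \ U with hT
      have hTmem : ∀ x : Fin (q * (q - 1)), x ∈ T ↔ x ∉ U := by
        intro x; rw [hT, Finset.mem_sdiff]; simp
      have htcard : U.card + T.card = q * (q - 1) := by
        rw [hT, Finset.card_sdiff_of_subset (Finset.subset_univ U), Finset.card_univ, Fintype.card_fin]
        omega
      have hexp : (q - 1) * (q - 2) + 3 * q = q * q + 2 := by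
        zify [show 1 ≤ q by omega, show 2 ≤ q by omega]; ring
      have hbon := bonferroni (fun x : Fin (q * (q - 1)) => D.blocks.filter (fun B => x ∈ B)) T
      rw [Finset.sum_congr rfl (fun x _ => hdeg x), Finset.sum_const, smul_eq_mul] at hbon
      have hoff : ∑ p ∈ T.offDiag, ((D.blocks.filter (fun B => p.1 ∈ B)) ∩
          (D.blocks.filter (fun B => p.2 ∈ B))).card ≤ T.card * T.card - T.card := by
        have h1 := Finset.sum_le_card_nsmul T.offDiag
          (fun p => ((D.blocks.filter (fun B => p.1 ∈ B)) ∩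
            (D.blocks.filter (fun B => p.2 ∈ B))).card) 1 ?_
        · rw [smul_eq_mul, mul_one] at h1
          calc _ ≤ T.offDiag.card := h1
            _ = _ := Finset.offDiag_card T
        · rintro ⟨x, y⟩ hp
          rw [Finset.mem_offDiag] at hp
          rw [Finset.card_le_one]
          intro B hBm B' hBm'
          simp only [Finset.mem_inter, Finset.mem_filter] at hBm hBm'
          exact two_blocks x y hp.2.2 B hBm.1.1 B' hBm'.1.1 hBm.1.2 hBm.2.2 hBm'.1.2 hBm'.2.2
      have hWsub : T.biUnion (fun x => D.blocks.filter (fun B => x ∈ B)) ⊆ Items \ R := by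
        intro B hB
        rw [Finset.mem_biUnion] at hB
        obtain ⟨x, hxT, hBx⟩ := hB
        rw [Finset.mem_filter] at hBx
        rw [Finset.mem_sdiff]
        refine ⟨by rw [hItems]; exact Finset.mem_union_left _ hBx.1, ?_⟩
        intro hBR
        exact (hTmem x).mp hxT (hUsub B hBR hBx.2)
      have hrn : R.card ≤ q ^ 2 + q - 3 := by rw [← hItemsCard]; exact Finset.card_le_card hR
      have hW : (T.biUnion (fun x => D.blocks.filter (fun B => x ∈ B))).card ≤
          (q ^ 2 + q - 3) - R.card := by
        calc _ ≤ (Items \ R).card := Finset.card_le_card hWsub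
          _ = Items.card - R.card := Finset.card_sdiff_of_subset hR
          _ = _ := by rw [hItemsCard]
      have hcomb : 2 * (T.card * q) ≤ 2 * ((q ^ 2 + q - 3) - R.card) +
          (T.card * T.card - T.card) := by omega
      have ht2 : 2 ≤ T.card := by omega
      have ht4 : T.card ≤ 2 * q - 4 := by omega
      have hru : q * q - q - T.card + 1 ≤ R.card := by omega
      zify [hrn, show 3 ≤ q ^ 2 + q by omega,
        show T.card ≤ T.card * T.card by nlinarith] at hcomb
      zify [show 4 ≤ 2 * q by omega] at ht4
      zify [show q ≤ q * q by omega, show T.card ≤ q * q - q by omega] at hru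
      have hq' : (4 : ℤ) ≤ (q : ℤ) := by exact_mod_cast hq
      have ht2' : (2 : ℤ) ≤ (T.card : ℤ) := by exact_mod_cast ht2
      have hhint : (0 : ℤ) ≤ ((T.card : ℤ) - 2) * (2 * (q : ℤ) - 4 - (T.card : ℤ)) :=
        mul_nonneg (by linarith) (by linarith)
      nlinarith [hcomb, hru, hhint, ht2', hq']
  refine ⟨hItemsCard, hcardX, hsum, hcardPt, hHall, ?_⟩
  -- the floor computation
  have s1 : q ≤ q ^ 2 := by omega
  have s2 : 1 ≤ q ^ 2 - q := by omega
  have s3 : 2 ≤ q ^ 2 - q := by omega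
  have s4 : 2 * q ≤ q ^ 2 := by omega
  set a := (q ^ 2 - q).choose (q - 1) with ha
  set c := (q ^ 2 - q - 1).choose (q - 1) with hc
  set b := (q ^ 2 - q - 2).choose (q - 1) with hb
  have hble : q - 1 ≤ q ^ 2 - q - 2 := by omega
  have hbpos : 0 < b := Nat.choose_pos hble
  have e1 := Nat.choose_mul_succ_eq (q ^ 2 - q - 2) (q - 1)
  rw [show q ^ 2 - q - 2 + 1 = q ^ 2 - q - 1 by omega,
    show q ^ 2 - q - 1 - (q - 1) = q ^ 2 - 2 * q by omega, ← hc, ← hb] at e1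
  have e2 := Nat.choose_mul_succ_eq (q ^ 2 - q - 1) (q - 1)
  rw [show q ^ 2 - q - 1 + 1 = q ^ 2 - q by omega,
    show q ^ 2 - q - (q - 1) = q ^ 2 - 2 * q + 1 by omega, ← hc, ← ha] at e2
  -- cast facts
  have s5 : 1 ≤ q ^ 2 - 2 * q := by omega
  have hC0 : ((q ^ 2 - q : ℕ) : ℚ) = (q : ℚ) ^ 2 - q := by
    rw [Nat.cast_sub s1]; push_cast; ring
  have hC1 : ((q ^ 2 - q - 1 : ℕ) : ℚ) = (q : ℚ) ^ 2 - q - 1 := by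
    rw [Nat.cast_sub s2, Nat.cast_sub s1]; push_cast; ring
  have hC2 : ((q ^ 2 - 2 * q : ℕ) : ℚ) = (q : ℚ) ^ 2 - 2 * q := by
    rw [Nat.cast_sub s4]; push_cast; ring
  have hC3 : ((q ^ 2 - 2 * q + 1 : ℕ) : ℚ) = (q : ℚ) ^ 2 - 2 * q + 1 := by
    rw [Nat.cast_add, hC2]; norm_num
  have E1 : (b : ℚ) * ((q : ℚ) ^ 2 - q - 1) = (c : ℚ) * ((q : ℚ) ^ 2 - 2 * q) := by
    rw [← hC1, ← hC2]; exact_mod_cast e1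
  have E2 : (c : ℚ) * ((q : ℚ) ^ 2 - q) = (a : ℚ) * ((q : ℚ) ^ 2 - 2 * q + 1) := by
    rw [← hC0, ← hC3]; exact_mod_cast e2
  set Q := (q : ℚ) with hQ
  have hQ4 : (4 : ℚ) ≤ Q := by rw [hQ]; exact_mod_cast hq
  have key : (b : ℚ) * ((Q ^ 2 - Q - 1) * (Q ^ 2 - Q)) =
      (a : ℚ) * ((Q ^ 2 - 2 * Q + 1) * (Q ^ 2 - 2 * Q)) := by
    linear_combination (Q ^ 2 - Q) * E1 + (Q ^ 2 - 2 * Q) * E2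
  have hbQ : (0 : ℚ) < (b : ℚ) := by exact_mod_cast hbpos
  have hDq : (0 : ℚ) < (Q ^ 2 - 2 * Q + 1) * (Q ^ 2 - 2 * Q) := by nlinarith
  have hP : (0 : ℚ) ≤ Q * (Q - 1) * (Q - 2) * (Q - 3) := by
    have h0 : (0 : ℚ) ≤ Q := by linarith
    have h1 : (0 : ℚ) ≤ Q - 1 := by linarith
    have h2 : (0 : ℚ) ≤ Q - 2 := by linarith
    have h3 : (0 : ℚ) ≤ Q - 3 := by linarith
    exact mul_nonneg (mul_nonneg (mul_nonneg h0 h1) h2) h3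
  have hfl : ⌊(Q ^ 2 - Q - 2) * (a : ℚ) / (b : ℚ)⌋ = (q : ℤ) ^ 2 + q - 2 := by
    rw [Int.floor_eq_iff]
    constructor
    · rw [le_div_iff₀ hbQ]
      have hid : (Q ^ 2 - Q - 2) * (a : ℚ) * ((Q ^ 2 - 2 * Q + 1) * (Q ^ 2 - 2 * Q)) -
          (Q ^ 2 + Q - 2) * (b : ℚ) * ((Q ^ 2 - 2 * Q + 1) * (Q ^ 2 - 2 * Q)) =
          (b : ℚ) * (Q * (Q - 1) * (Q - 2) * (Q - 3)) := by
        linear_combination (-(Q ^ 2 - Q - 2)) * key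
      have step : (Q ^ 2 + Q - 2) * (b : ℚ) * ((Q ^ 2 - 2 * Q + 1) * (Q ^ 2 - 2 * Q)) ≤
          (Q ^ 2 - Q - 2) * (a : ℚ) * ((Q ^ 2 - 2 * Q + 1) * (Q ^ 2 - 2 * Q)) := by
        nlinarith [mul_nonneg hbQ.le hP]
      have hfin := le_of_mul_le_mul_right step hDq
      push_cast
      linarith
    · rw [div_lt_iff₀ hbQ]
      have hid2 : (Q ^ 2 + Q - 1) * (b : ℚ) * ((Q ^ 2 - 2 * Q + 1) * (Q ^ 2 - 2 * Q)) -
          (Q ^ 2 - Q - 2) * (a : ℚ) * ((Q ^ 2 - 2 * Q + 1) * (Q ^ 2 - 2 * Q)) =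
          (b : ℚ) * (2 * Q * (Q - 1) * (Q - 2)) := by
        linear_combination (Q ^ 2 - Q - 2) * key
      have hpos2 : (0 : ℚ) < (b : ℚ) * (2 * Q * (Q - 1) * (Q - 2)) := by
        apply mul_pos hbQ
        have h0 : (0 : ℚ) < Q := by linarith
        have h1 : (0 : ℚ) < Q - 1 := by linarith
        have h2 : (0 : ℚ) < Q - 2 := by linarith
        positivity
      have step : (Q ^ 2 - Q - 2) * (a : ℚ) * ((Q ^ 2 - 2 * Q + 1) * (Q ^ 2 - 2 * Q)) <
          (Q ^ 2 + Q - 1) * (b : ℚ) * ((Q ^ 2 - 2 * Q + 1) * (Q ^ 2 - 2 * Q)) := by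
        linarith
      have hfin := lt_of_mul_lt_mul_right step hDq.le
      push_cast
      linarith
  rw [hfl]
  push_cast
  ring
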